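/- Let U ⊆ ℂ be a bounded connected open set, and let W_n, W ⊆ U be connected open sets with 0 ∈ W_n for all n and 0 ∈ W. Assume (W_n) converges to W in the kernel sense and that the set F associated to (W_n) and W has empty interior in ℂ. Then η_{W_n}(q) → η_W(q) for every q ∈ W. (This is Theorem 1.8(1) of the paper for the trivial single-leaf nonsingular foliation of U, whose unique leaf through any point is U itself.) -/

import Mathlib

open Filter Metric Topology Set
open scoped BoundedContinuousFunction

/-- The kernel of a sequence of open sets: the union over `n` of the connected
component containing `0` of the interior of `⋂ k ≥ n, W k`. -/
def seqKernel {X : Type*} [TopologicalSpace X] [Zero X] (W : ℕ → Set X) : Set X :=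
  ⋃ n, connectedComponentIn (interior (⋂ k, ⋂ (_ : n ≤ k), W k)) 0

/-- The set `F` associated to a sequence `(W n)` and a limit set `W₀`: points
outside `closure W₀` that are limits of points `p k ∈ W (n k) \ closure W₀`
along a strictly increasing sequence of indices. -/
def Fset {X : Type*} [TopologicalSpace X] (W : ℕ → Set X) (W₀ : Set X) : Set X :=
  {p | p ∉ closure W₀ ∧ ∃ nk : ℕ → ℕ, StrictMono nk ∧ ∃ pk : ℕ → X,
    (∀ k, pk k ∈ W (nk k) \ closure W₀) ∧ Tendsto pk atTop (nhds p)}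

/-- The modulus-of-uniformization function of a plane domain `Ω` (for the trivial
single-leaf foliation): the supremum of `|f'(0)|` over holomorphic maps
`f : 𝔻 → Ω` with `f 0 = p` (with `sSup ∅ = 0`). -/
noncomputable def eta (Ω : Set ℂ) (p : ℂ) : ℝ :=
  sSup {r : ℝ | ∃ f : ℂ → ℂ, DifferentiableOn ℂ f (ball (0 : ℂ) 1) ∧ f 0 = p ∧
    (∀ z ∈ ball (0 : ℂ) 1, f z ∈ Ω) ∧ r = ‖deriv f 0‖}

/-- A uniform Lipschitz estimate on a smaller disc for holomorphic functions on the unit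
disc that are uniformly bounded. -/
lemma lip_est {f : ℂ → ℂ} {R r : ℝ} (hr1 : r < 1)
    (hd : DifferentiableOn ℂ f (ball 0 1)) (hb : ∀ z ∈ ball (0:ℂ) 1, f z ∈ closedBall 0 R)
    {z w : ℂ} (hz : z ∈ closedBall (0:ℂ) r) (hw : w ∈ closedBall (0:ℂ) r) :
    dist (f z) (f w) ≤ (2 * R + 1) / (1 - r) * dist z w := by
  have hR0 : 0 ≤ R := by
    have := hb 0 (mem_ball_self one_pos)
    exact dist_nonneg.trans (mem_closedBall.mp this)
  have h1r : (0:ℝ) < 1 - r := by linarith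
  have hsub : ball w (1 - r) ⊆ ball (0:ℂ) 1 := by
    intro x hx
    rw [mem_ball_zero_iff]
    have h1 : ‖x - w‖ < 1 - r := by rwa [mem_ball, dist_eq_norm] at hx
    have h2 : ‖w‖ ≤ r := mem_closedBall_zero_iff.mp hw
    calc ‖x‖ = ‖x - w + w‖ := by ring_nf
      _ ≤ ‖x - w‖ + ‖w‖ := norm_add_le _ _
      _ < 1 := by linarith
  have hw1 : w ∈ ball (0:ℂ) 1 := closedBall_subset_ball hr1 hw
  have hmaps : MapsTo f (ball w (1 - r)) (ball (f w) (2 * R + 1)) := by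
    intro x hx
    have h1 := mem_closedBall.mp (hb x (hsub hx))
    have h2 := mem_closedBall.mp (hb w hw1)
    rw [mem_ball]
    calc dist (f x) (f w) ≤ dist (f x) 0 + dist 0 (f w) := dist_triangle _ _ _
      _ = dist (f x) 0 + dist (f w) 0 := by rw [dist_comm 0]
      _ < 2 * R + 1 := by linarith
  rcases lt_or_ge (dist z w) (1 - r) with hcase | hcase
  · exact Complex.dist_le_div_mul_dist_of_mapsTo_ball (hd.mono hsub) (hmaps.mono_right ball_subset_closedBall) (mem_ball.mpr hcase)
  · have h1 := mem_closedBall.mp (hb z (closedBall_subset_ball hr1 hz))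
    have h2 := mem_closedBall.mp (hb w hw1)
    have hL : (0:ℝ) ≤ (2 * R + 1) / (1 - r) := by positivity
    calc dist (f z) (f w) ≤ dist (f z) 0 + dist 0 (f w) := dist_triangle _ _ _
      _ ≤ 2 * R + 1 := by rw [dist_comm 0]; linarith
      _ = (2 * R + 1) / (1 - r) * (1 - r) := by field_simp
      _ ≤ (2 * R + 1) / (1 - r) * dist z w := mul_le_mul_of_nonneg_left hcase hL

set_option synthInstance.maxHeartbeats 1000000 in
/-- Montel's theorem, special case: a uniformly bounded sequence of holomorphic functions
on the unit disc has a subsequence converging uniformly on a given closed smaller disc. -/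
lemma montel_aux {f : ℕ → ℂ → ℂ} {R r : ℝ} (hr1 : r < 1)
    (hd : ∀ k, DifferentiableOn ℂ (f k) (ball 0 1))
    (hb : ∀ k, ∀ z ∈ ball (0:ℂ) 1, f k z ∈ closedBall 0 R) :
    ∃ φ : ℕ → ℕ, StrictMono φ ∧ ∃ g : ℂ → ℂ,
      TendstoUniformlyOn (fun k => f (φ k)) g atTop (closedBall 0 r) := by
  classical
  haveI : CompactSpace (closedBall (0:ℂ) r) :=
    isCompact_iff_compactSpace.mp (isCompact_closedBall 0 r)
  have hsubset : closedBall (0:ℂ) r ⊆ ball 0 1 := closedBall_subset_ball hr1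
  set F : ℕ → ↥(closedBall (0:ℂ) r) →ᵇ ℂ := fun k =>
    BoundedContinuousFunction.mkOfCompact
      ⟨Set.restrict _ (f k), ((hd k).continuousOn.mono hsubset).restrict⟩ with hF
  have hFapp : ∀ k (x : closedBall (0:ℂ) r), F k x = f k x := fun k x => rfl
  have in_s : ∀ (g : ↥(closedBall (0:ℂ) r) →ᵇ ℂ) (x : closedBall (0:ℂ) r),
      g ∈ Set.range F → g x ∈ closedBall (0:ℂ) R := by
    rintro g x ⟨k, rfl⟩
    exact hb k x (hsubset x.2)
  have equi : Equicontinuous ((↑) : Set.range F → (closedBall (0:ℂ) r) → ℂ) := by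
    apply Metric.equicontinuous_of_continuity_modulus (fun t => (2 * R + 1) / (1 - r) * t)
    · have : Tendsto (fun t : ℝ => (2 * R + 1) / (1 - r) * t) (nhds 0)
          (nhds ((2 * R + 1) / (1 - r) * 0)) :=
        (continuous_const.mul continuous_id).tendsto 0
      simpa using this
    · rintro x y ⟨g, ⟨k, rfl⟩⟩
      show dist (F k x) (F k y) ≤ _
      rw [hFapp, hFapp, Subtype.dist_eq]
      exact lip_est hr1 (hd k) (hb k) x.2 y.2
  have hcomp : IsCompact (closure (Set.range F)) :=
    BoundedContinuousFunction.arzela_ascoli (closedBall (0:ℂ) R)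
      (isCompact_closedBall _ _) (Set.range F) in_s equi
  obtain ⟨G, hG, φ, hφ, hcv⟩ :=
    hcomp.isSeqCompact (x := F) (fun k => subset_closure ⟨k, rfl⟩)
  refine ⟨φ, hφ, fun z => if h : z ∈ closedBall (0:ℂ) r then G ⟨z, h⟩ else 0, ?_⟩
  rw [tendstoUniformlyOn_iff_tendstoUniformly_comp_coe]
  have hTU : TendstoUniformly (fun k => ⇑(F (φ k))) ⇑G atTop :=
    BoundedContinuousFunction.tendsto_iff_tendstoUniformly.mp hcv
  convert hTU using 1
  · rfl
  funext x
  simp only [Function.comp_apply, dif_pos x.2, Subtype.coe_eta]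

lemma seqKernel_isOpen (V : ℕ → Set ℂ) : IsOpen (seqKernel V) :=
  isOpen_iUnion fun _ => isOpen_interior.connectedComponentIn

/-- If every point of a preconnected set `S` has a uniform ball eventually contained in
all the `V j`, and `S` meets the kernel of `(V j)`, then `S` is contained in the kernel. -/
lemma subset_seqKernel_of_forall_ball {V : ℕ → Set ℂ} {S : Set ℂ} (hS : IsPreconnected S)
    (hx : ∃ x ∈ S, x ∈ seqKernel V)
    (hP : ∀ q ∈ S, ∃ ε > 0, ∃ m : ℕ, ∀ j ≥ m, ball q ε ⊆ V j) :
    S ⊆ seqKernel V := by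
  set u := seqKernel V with hu_def
  have hu_open : IsOpen u := seqKernel_isOpen V
  have claim : ∀ q, q ∈ S ∧ q ∉ u → ∃ ε, 0 < ε ∧ ball q ε ∩ u = ∅ := by
    rintro q ⟨hqS, hqu⟩
    obtain ⟨ε, hε, m, hm⟩ := hP q hqS
    refine ⟨ε, hε, ?_⟩
    by_contra hne
    rw [← ne_eq, ← nonempty_iff_ne_empty] at hne
    obtain ⟨x, hxb, hxu⟩ := hne
    obtain ⟨m', hx'⟩ := mem_iUnion.mp hxu
    set M := max m m' with hM
    have hTT : (⋂ k, ⋂ (_ : m' ≤ k), V k) ⊆ ⋂ k, ⋂ (_ : M ≤ k), V k := by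
      intro z hz
      simp only [mem_iInter] at hz ⊢
      exact fun k hk => hz k (le_trans (le_max_right m m') hk)
    have hx2 : x ∈ connectedComponentIn (interior (⋂ k, ⋂ (_ : M ≤ k), V k)) 0 :=
      connectedComponentIn_mono 0 (interior_mono hTT) hx'
    have hball : ball q ε ⊆ interior (⋂ k, ⋂ (_ : M ≤ k), V k) := by
      apply interior_maximal _ isOpen_ball
      intro z hz
      simp only [mem_iInter]
      exact fun k hk => hm k (le_trans (le_max_left m m') hk) hz
    have h3 : ball q ε ⊆ connectedComponentIn (interior (⋂ k, ⋂ (_ : M ≤ k), V k)) 0 := by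
      have h4 := (convex_ball q ε).isPreconnected.subset_connectedComponentIn hxb hball
      rwa [← connectedComponentIn_eq hx2] at h4
    exact hqu (mem_iUnion.mpr ⟨M, h3 (mem_ball_self hε)⟩)
  choose! rad hrad using claim
  set v := ⋃ q ∈ {x | x ∈ S ∧ x ∉ u}, ball q (rad q) with hv_def
  have hv_open : IsOpen v := isOpen_biUnion fun _ _ => isOpen_ball
  have hdisj : Disjoint u v := by
    rw [Set.disjoint_right]
    intro a hav hau
    obtain ⟨q, hq, haq⟩ := mem_iUnion₂.mp hav
    have := (hrad q hq).2
    exact absurd (mem_inter haq hau) (by rw [this]; exact notMem_empty a)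
  have hcover : S ⊆ u ∪ v := by
    intro q hqS
    by_cases hq : q ∈ u
    · exact Or.inl hq
    · exact Or.inr (mem_iUnion₂.mpr ⟨q, ⟨hqS, hq⟩, mem_ball_self (hrad q ⟨hqS, hq⟩).1⟩)
  obtain ⟨x, hxS, hxu⟩ := hx
  exact hS.subset_left_of_subset_union hu_open hv_open hdisj hcover ⟨x, hxS, hxu⟩

/-- Hurwitz-type statement: if holomorphic functions `g k` on the unit disc with values in
`V k` converge locally uniformly on `ball 0 s` to a nonconstant `f`, then around each point
of the image of `f` a fixed ball is eventually contained in all `V j`. -/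
lemma hurwitz_ball {g : ℕ → ℂ → ℂ} {V : ℕ → Set ℂ} {f : ℂ → ℂ} {s : ℝ}
    (hs1 : s < 1)
    (hdg : ∀ k, DifferentiableOn ℂ (g k) (ball 0 1))
    (hmaps : ∀ k, ∀ z ∈ ball (0:ℂ) 1, g k z ∈ V k)
    (hTLU : TendstoLocallyUniformlyOn g f atTop (ball 0 s))
    (hf : DifferentiableOn ℂ f (ball 0 s)) (hnc : deriv f 0 ≠ 0)
    {z₀ : ℂ} (hz₀ : z₀ ∈ ball (0:ℂ) s) :
    ∃ ε > 0, ∃ m : ℕ, ∀ j ≥ m, ball (f z₀) ε ⊆ V j := by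
  have hs0 : (0:ℝ) < s := pos_of_mem_ball hz₀
  have h0s : (0:ℂ) ∈ ball (0:ℂ) s := mem_ball_self hs0
  have hfa : AnalyticOnNhd ℂ f (ball 0 s) := hf.analyticOnNhd isOpen_ball
  have hball_pc : IsPreconnected (ball (0:ℂ) s) := (convex_ball _ _).isPreconnected
  have h1 : ¬ ∀ᶠ z in nhds z₀, f z = f z₀ := by
    intro hev
    have heq : EqOn f (fun _ => f z₀) (ball 0 s) :=
      hfa.eqOn_of_preconnected_of_eventuallyEq analyticOnNhd_const hball_pc hz₀ hev
    have hd0 : deriv f 0 = 0 := by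
      have hev0 : f =ᶠ[nhds 0] fun _ => f z₀ :=
        Filter.eventuallyEq_of_mem (isOpen_ball.mem_nhds h0s) heq
      rw [hev0.deriv_eq]; exact deriv_const _ _
    exact hnc hd0
  have h2 : ∀ᶠ z in nhdsWithin z₀ {z₀}ᶜ, f z ≠ f z₀ :=
    ((hfa z₀ hz₀).eventually_eq_or_eventually_ne analyticAt_const).resolve_left h1
  rw [eventually_nhdsWithin_iff] at h2
  obtain ⟨δ, hδ, hδ'⟩ := Metric.eventually_nhds_iff.mp h2
  have hz₀s : dist z₀ 0 < s := mem_ball.mp hz₀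
  set ρ : ℝ := min (δ/2) ((s - dist z₀ 0)/2) with hρdef
  have hρ : 0 < ρ := lt_min (by positivity) (by linarith)
  have hρball : closedBall z₀ ρ ⊆ ball (0:ℂ) s := by
    intro x hx
    have h3 : dist x z₀ ≤ ρ := mem_closedBall.mp hx
    have h4 : ρ ≤ (s - dist z₀ 0)/2 := min_le_right _ _
    rw [mem_ball]
    calc dist x 0 ≤ dist x z₀ + dist z₀ 0 := dist_triangle _ _ _
      _ < s := by linarith
  have hρ1 : closedBall z₀ ρ ⊆ ball (0:ℂ) 1 := hρball.trans (ball_subset_ball hs1.le)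
  have hsphere_ne : ∀ z ∈ sphere z₀ ρ, f z ≠ f z₀ := by
    intro z hz
    have hzρ : dist z z₀ = ρ := mem_sphere.mp hz
    refine hδ' (by rw [hzρ]; exact (min_le_left _ _).trans_lt (by linarith)) ?_
    simp only [mem_compl_iff, mem_singleton_iff]
    intro h; rw [h] at hzρ; simp at hzρ; linarith
  have hmin : ∃ w ∈ sphere z₀ ρ, IsMinOn (fun z => ‖f z - f z₀‖) (sphere z₀ ρ) w := by
    apply (isCompact_sphere z₀ ρ).exists_isMinOn
      (NormedSpace.sphere_nonempty.mpr hρ.le)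
    exact ((hf.continuousOn.mono ((sphere_subset_closedBall).trans hρball)).sub
      continuousOn_const).norm
  obtain ⟨w, hw, hwmin⟩ := hmin
  set ε₀ : ℝ := ‖f w - f z₀‖ with hε₀def
  have hε₀ : 0 < ε₀ := norm_pos_iff.mpr (sub_ne_zero.mpr (hsphere_ne w hw))
  have hTU : TendstoUniformlyOn g f atTop (closedBall z₀ ρ) :=
    (tendstoLocallyUniformlyOn_iff_forall_isCompact isOpen_ball).mp hTLU
      (closedBall z₀ ρ) hρball (isCompact_closedBall _ _)
  have hev : ∀ᶠ j in atTop, ∀ x ∈ closedBall z₀ ρ, dist (f x) (g j x) < ε₀/8 :=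
    Metric.tendstoUniformlyOn_iff.mp hTU _ (by positivity)
  obtain ⟨m, hm⟩ := eventually_atTop.mp hev
  refine ⟨ε₀/8, by positivity, m, ?_⟩
  intro j hj
  have hj' := hm j hj
  have hz₀cb : z₀ ∈ closedBall z₀ ρ := mem_closedBall_self hρ.le
  have hsphere_lb : ∀ z ∈ sphere z₀ ρ, ε₀/2 ≤ ‖g j z - g j z₀‖ := by
    intro z hz
    have ha : ε₀ ≤ ‖f z - f z₀‖ := hwmin hz
    have hb : dist (f z) (g j z) < ε₀/8 := hj' z (sphere_subset_closedBall hz)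
    have hc : dist (f z₀) (g j z₀) < ε₀/8 := hj' z₀ hz₀cb
    have htri : dist (f z) (f z₀) ≤ dist (f z) (g j z) + dist (g j z) (g j z₀)
        + dist (g j z₀) (f z₀) := dist_triangle4 _ _ _ _
    rw [← dist_eq_norm] at ha ⊢
    rw [dist_comm (g j z₀) (f z₀)] at htri
    linarith
  have hdiffcl : DiffContOnCl ℂ (g j) (ball z₀ ρ) := by
    apply DifferentiableOn.diffContOnCl
    rw [closure_ball z₀ hρ.ne']
    exact (hdg j).mono hρ1
  have hfreq : ∃ᶠ z in nhds z₀, g j z ≠ g j z₀ := by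
    by_contra hcon
    rw [not_frequently] at hcon
    simp only [not_not] at hcon
    have heq : EqOn (g j) (fun _ => g j z₀) (ball 0 1) :=
      ((hdg j).analyticOnNhd isOpen_ball).eqOn_of_preconnected_of_eventuallyEq
        analyticOnNhd_const (convex_ball _ _).isPreconnected
        (hρ1 hz₀cb) hcon
    have hweq : g j w = g j z₀ := heq (hρ1 (sphere_subset_closedBall hw))
    have := hsphere_lb w hw
    rw [hweq, sub_self, norm_zero] at this
    linarith
  have himg : ball (g j z₀) (ε₀/2/2) ⊆ g j '' closedBall z₀ ρ :=
    DiffContOnCl.ball_subset_image_closedBall hdiffcl hρ hsphere_lb hfreq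
  intro x hx
  have hx2 : x ∈ ball (g j z₀) (ε₀/2/2) := by
    rw [mem_ball] at hx ⊢
    have hc : dist (f z₀) (g j z₀) < ε₀/8 := hj' z₀ hz₀cb
    calc dist x (g j z₀) ≤ dist x (f z₀) + dist (f z₀) (g j z₀) := dist_triangle _ _ _
      _ < ε₀/2/2 := by linarith
  obtain ⟨y, hy, rfl⟩ := himg hx2
  exact hmaps j y (hρ1 hy)

/-- Any competitor for `eta` on a domain inside `ball 0 R` has derivative at most
`R + |p|`. -/
lemma etaSet_le {Ω : Set ℂ} {p : ℂ} {R : ℝ} (hΩ : Ω ⊆ ball 0 R) :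
    ∀ x ∈ {r : ℝ | ∃ f : ℂ → ℂ, DifferentiableOn ℂ f (ball (0 : ℂ) 1) ∧ f 0 = p ∧
      (∀ z ∈ ball (0 : ℂ) 1, f z ∈ Ω) ∧ r = ‖deriv f 0‖},
      x ≤ R + ‖p‖ := by
  rintro x ⟨f, hd, h0, hm, rfl⟩
  have maps : MapsTo f (ball (0:ℂ) 1) (ball (f 0) (R + ‖p‖)) := by
    intro z hz
    have h1 : ‖f z‖ < R := mem_ball_zero_iff.mp (hΩ (hm z hz))
    rw [mem_ball, h0]
    have h2 := dist_le_norm_add_norm (f z) p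
    have h3 : ‖p‖ = ‖p‖ := rfl
    linarith
  have h2 := Complex.norm_deriv_le_div_of_mapsTo_ball hd (maps.mono_right ball_subset_closedBall) one_pos
  rw [div_one] at h2
  exact h2

/-- Theorem 1.8(1) for the trivial single-leaf foliation of a bounded plane
domain `U`: if `(W n)` converges to `W₀` in the kernel sense and the set `F`
has empty interior in `ℂ`, then `η_{W n} q → η_{W₀} q` for every `q ∈ W₀`. -/
theorem eta_pointwise_convergence_of_kernel_convergence_F_empty_interior
    (U : Set ℂ) (hUopen : IsOpen U) (hUconn : IsConnected U)
    (hUbdd : Bornology.IsBounded U)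
    (W : ℕ → Set ℂ) (W₀ : Set ℂ)
    (hWopen : ∀ n, IsOpen (W n)) (hWconn : ∀ n, IsConnected (W n))
    (hWU : ∀ n, W n ⊆ U) (h0 : ∀ n, (0 : ℂ) ∈ W n)
    (hW₀open : IsOpen W₀) (hW₀conn : IsConnected W₀) (hW₀U : W₀ ⊆ U)
    (h0W₀ : (0 : ℂ) ∈ W₀)
    (hker : seqKernel W = W₀)
    (hsub : ∀ σ : ℕ → ℕ, StrictMono σ → seqKernel (fun k => W (σ k)) = W₀)
    (hF : interior (Fset W W₀) = ∅) :
    ∀ p ∈ W₀, Tendsto (fun n => eta (W n) p) atTop (nhds (eta W₀ p)) := by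
  intro p hp
  obtain ⟨R, hRpos, hRU⟩ := hUbdd.subset_ball_lt 0 0
  set E : Set ℂ → Set ℝ := fun Ω => {r : ℝ | ∃ f : ℂ → ℂ,
    DifferentiableOn ℂ f (ball (0 : ℂ) 1) ∧ f 0 = p ∧
    (∀ z ∈ ball (0 : ℂ) 1, f z ∈ Ω) ∧ r = ‖deriv f 0‖} with hE
  have hetadef : ∀ Ω, eta Ω p = sSup (E Ω) := fun Ω => rfl
  have hbdd : ∀ Ω, Ω ⊆ U → BddAbove (E Ω) := fun Ω h =>
    ⟨R + ‖p‖, fun x hx => etaSet_le (h.trans hRU) x hx⟩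
  have hnn : ∀ Ω : Set ℂ, 0 ≤ eta Ω p := by
    intro Ω
    rw [hetadef]
    apply Real.sSup_nonneg
    rintro x ⟨f, -, -, -, rfl⟩
    exact norm_nonneg _
  rw [tendsto_order]
  constructor
  · -- lower bound
    intro a ha
    have hne : (E W₀).Nonempty := by
      refine ⟨‖deriv (fun _ => p) 0‖, fun _ => p,
        differentiableOn_const _, rfl, fun z _ => hp, rfl⟩
    obtain ⟨x, hxE, hax⟩ := exists_lt_of_lt_csSup hne ha
    obtain ⟨f, hfd, hf0, hfm, rfl⟩ := hxE
    by_cases hder : deriv f 0 = 0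
    · rw [hder] at hax; simp only [norm_zero] at hax
      exact Eventually.of_forall fun n => lt_of_lt_of_le hax (hnn (W n))
    · set x := ‖deriv f 0‖ with hxdef
      have hx0 : 0 < x := norm_pos_iff.mpr hder
      set t := max a 0 with ht
      have htx : t < x := max_lt hax hx0
      have ht0 : 0 ≤ t := le_max_right a 0
      set r := (t + x)/(2*x) with hr
      have hr0 : 0 < r := by positivity
      have hr1 : r < 1 := by rw [div_lt_one (by positivity)]; linarith
      have hrx : a < r * x := by
        have hrx2 : r * x = (t + x)/2 := by rw [hr]; field_simp [hx0.ne']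
        have : t < (t + x)/2 := by linarith
        have ha2 : a ≤ t := le_max_left a 0
        linarith
      have hK : IsCompact (f '' closedBall 0 r) :=
        (isCompact_closedBall _ _).image_of_continuousOn
          (hfd.continuousOn.mono (closedBall_subset_ball hr1))
      have hKW₀ : f '' closedBall 0 r ⊆ W₀ := by
        rintro _ ⟨z, hz, rfl⟩
        exact hfm z (closedBall_subset_ball hr1 hz)
      have hKker : f '' closedBall 0 r ⊆
          ⋃ n, interior (⋂ k, ⋂ (_ : n ≤ k), W k) := by
        intro q hq
        have hq2 : q ∈ seqKernel W := hker.symm ▸ hKW₀ hq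
        obtain ⟨n, hn⟩ := mem_iUnion.mp hq2
        exact mem_iUnion.mpr ⟨n, connectedComponentIn_subset _ _ hn⟩
      obtain ⟨tf, htf⟩ := hK.elim_finite_subcover _ (fun n => isOpen_interior) hKker
      set N := tf.sup id with hN
      have hKN : ∀ k, N ≤ k → f '' closedBall 0 r ⊆ W k := by
        intro k hk q hq
        obtain ⟨n, hn, hq2⟩ := mem_iUnion₂.mp (htf hq)
        have h3 : q ∈ ⋂ k', ⋂ (_ : n ≤ k'), W k' := interior_subset hq2
        have h4 : n ≤ k := le_trans (Finset.le_sup (f := id) hn) hk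
        exact mem_iInter.mp (mem_iInter.mp h3 k) h4
      set g : ℂ → ℂ := fun z => f ((r:ℂ) * z) with hg
      have hmulmaps : ∀ z ∈ ball (0:ℂ) 1, (r:ℂ) * z ∈ closedBall (0:ℂ) r := by
        intro z hz
        rw [mem_closedBall_zero_iff]
        rw [mem_ball_zero_iff] at hz
        calc ‖(r:ℂ) * z‖ = r * ‖z‖ := by
              rw [norm_mul, Complex.norm_real, Real.norm_eq_abs, abs_of_pos hr0]
          _ ≤ r * 1 := by nlinarith
          _ = r := mul_one r
      have hgd : DifferentiableOn ℂ g (ball 0 1) := by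
        apply DifferentiableOn.comp hfd
          ((differentiable_id.const_mul ((r:ℂ))).differentiableOn)
        intro z hz
        exact closedBall_subset_ball hr1 (hmulmaps z hz)
      have hg0 : g 0 = p := by simp only [hg, mul_zero, hf0]
      have hgm : ∀ z ∈ ball (0:ℂ) 1, g z ∈ f '' closedBall 0 r :=
        fun z hz => ⟨_, hmulmaps z hz, rfl⟩
      have hderg : deriv g 0 = deriv f 0 * r := by
        have h1 : HasDerivAt (fun z : ℂ => (r:ℂ) * z) (r:ℂ) 0 := by
          simpa using (hasDerivAt_id (0:ℂ)).const_mul ((r:ℂ))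
        have h2 : HasDerivAt f (deriv f 0) ((r:ℂ) * 0) := by
          rw [mul_zero]
          exact (hfd.differentiableAt
            (isOpen_ball.mem_nhds (mem_ball_self one_pos))).hasDerivAt
        have h3 := h2.comp 0 h1
        exact h3.deriv
      refine eventually_atTop.mpr ⟨N, fun k hk => ?_⟩
      have hmem : ‖deriv g 0‖ ∈ E (W k) :=
        ⟨g, hgd, hg0, fun z hz => hKN k hk (hgm z hz), rfl⟩
      have hle : ‖deriv g 0‖ ≤ eta (W k) p :=
        le_csSup (hbdd (W k) (hWU k)) hmem
      have habs : ‖deriv g 0‖ = x * r := by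
        rw [hderg, norm_mul, Complex.norm_real, Real.norm_eq_abs, abs_of_pos hr0]
      rw [habs] at hle
      calc a < r * x := hrx
        _ = x * r := mul_comm r x
        _ ≤ eta (W k) p := hle
  · -- upper bound
    intro a ha
    by_contra hcon
    rw [not_eventually] at hcon
    have hfreq : ∃ᶠ n in atTop, a ≤ eta (W n) p := hcon.mono fun n h => not_lt.mp h
    obtain ⟨σ0, hσ0, hσ0a⟩ := Filter.extraction_of_frequently_atTop hfreq
    have hL0 : 0 ≤ eta W₀ p := hnn W₀
    set L := eta W₀ p with hLdef
    set b := (L + a)/2 with hb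
    have hLb : L < b := by rw [hb]; linarith
    have hba : b < a := by rw [hb]; linarith
    have hb0 : 0 < b := by rw [hb]; linarith
    have hcomp : ∀ k, ∃ f : ℂ → ℂ, DifferentiableOn ℂ f (ball 0 1) ∧ f 0 = p ∧
        (∀ z ∈ ball (0:ℂ) 1, f z ∈ W (σ0 k)) ∧ b < ‖deriv f 0‖ := by
      intro k
      have hne : (E (W (σ0 k))).Nonempty := by
        by_contra h
        rw [not_nonempty_iff_eq_empty] at h
        have h2 : eta (W (σ0 k)) p = 0 := by
          rw [hetadef, h]; exact Real.sSup_empty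
        have h3 := hσ0a k
        rw [h2] at h3
        linarith
      obtain ⟨x, hxE, hbx⟩ := exists_lt_of_lt_csSup hne (lt_of_lt_of_le hba (hσ0a k))
      obtain ⟨f, h1, h2, h3, rfl⟩ := hxE
      exact ⟨f, h1, h2, h3, hbx⟩
    choose f hfd hf0 hfm hfb using hcomp
    set r := (L/b + 1)/2 with hr
    have hLb' : L/b < 1 := (div_lt_one hb0).mpr hLb
    have hLb0 : 0 ≤ L/b := by positivity
    have hr0 : 0 < r := by rw [hr]; linarith
    have hr1 : r < 1 := by rw [hr]; linarith
    have hrbL : L < r * b := by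
      have h4 : r * b = (L + b)/2 := by rw [hr]; field_simp [hb0.ne']
      rw [h4]; linarith
    set s := (r + 1)/2 with hs
    have hs0 : 0 < s := by rw [hs]; linarith
    have hrs : r < s := by rw [hs]; linarith
    have hs1 : s < 1 := by rw [hs]; linarith
    have hbnd : ∀ k, ∀ z ∈ ball (0:ℂ) 1, f k z ∈ closedBall (0:ℂ) R :=
      fun k z hz => ball_subset_closedBall (hRU (hWU _ (hfm k z hz)))
    obtain ⟨φ, hφ, g, hTU⟩ := montel_aux (r := s) hs1 hfd hbnd
    have hTLU : TendstoLocallyUniformlyOn (fun k => f (φ k)) g atTop (ball 0 s) :=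
      (hTU.tendstoLocallyUniformlyOn).mono ball_subset_closedBall
    have hdev : ∀ᶠ k in atTop, DifferentiableOn ℂ (f (φ k)) (ball 0 s) :=
      Eventually.of_forall fun k => (hfd _).mono (ball_subset_ball hs1.le)
    have hgd : DifferentiableOn ℂ g (ball 0 s) := hTLU.differentiableOn hdev isOpen_ball
    have hderivTLU := hTLU.deriv hdev isOpen_ball
    have h0s : (0:ℂ) ∈ ball (0:ℂ) s := mem_ball_self hs0
    have hd0 : Tendsto (fun k => deriv (f (φ k)) 0) atTop (nhds (deriv g 0)) :=
      hderivTLU.tendsto_at h0s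
    have habs : Tendsto (fun k => ‖deriv (f (φ k)) 0‖) atTop
        (nhds (‖deriv g 0‖)) := (continuous_norm.tendsto _).comp hd0
    have hble : b ≤ ‖deriv g 0‖ :=
      ge_of_tendsto' habs fun k => (hfb (φ k)).le
    have hg0 : g 0 = p := by
      refine tendsto_nhds_unique (hTLU.tendsto_at h0s) ?_
      simp only [hf0]
      exact tendsto_const_nhds
    have hgnc : deriv g 0 ≠ 0 := by
      intro h
      rw [h, norm_zero] at hble
      linarith
    set σ := σ0 ∘ φ with hσdef
    have hσ : StrictMono σ := hσ0.comp hφ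
    have himg_open : IsOpen (g '' ball 0 s) := by
      rcases (hgd.analyticOnNhd isOpen_ball).is_constant_or_isOpen
          (convex_ball _ _).isPreconnected with ⟨w, hw⟩ | hopen
      · exfalso
        apply hgnc
        have hev : g =ᶠ[nhds 0] fun _ => w :=
          Filter.eventuallyEq_of_mem (isOpen_ball.mem_nhds h0s) fun z hz => hw z hz
        rw [hev.deriv_eq]
        exact deriv_const _ _
      · exact hopen _ subset_rfl isOpen_ball
    have hS_pc : IsPreconnected (g '' ball 0 s ∪ W₀) := by
      apply IsPreconnected.union p
      · exact ⟨0, h0s, hg0⟩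
      · exact hp
      · exact ((convex_ball _ _).isPreconnected).image g hgd.continuousOn
      · exact hW₀conn.isPreconnected
    have hSsub : g '' ball 0 s ∪ W₀ ⊆ seqKernel (fun k => W (σ k)) := by
      apply subset_seqKernel_of_forall_ball hS_pc
      · refine ⟨0, Or.inr h0W₀, ?_⟩
        rw [hsub σ hσ]
        exact h0W₀
      · intro q hq
        rcases hq with ⟨z₀, hz₀, rfl⟩ | hqW₀
        · exact hurwitz_ball (V := fun k => W (σ k)) hs1 (fun k => hfd (φ k))
            (fun k z hz => hfm (φ k) z hz) hTLU hgd hgnc hz₀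
        · have hqker : q ∈ seqKernel W := hker.symm ▸ hqW₀
          obtain ⟨n, hn⟩ := mem_iUnion.mp hqker
          have h5 : q ∈ interior (⋂ k, ⋂ (_ : n ≤ k), W k) :=
            connectedComponentIn_subset _ _ hn
          obtain ⟨ε, hε, hball⟩ := Metric.isOpen_iff.mp isOpen_interior q h5
          refine ⟨ε, hε, n, fun j hj z hz => ?_⟩
          have h6 : z ∈ ⋂ k, ⋂ (_ : n ≤ k), W k := interior_subset (hball hz)
          have h7 : n ≤ σ j := le_trans hj hσ.le_apply
          exact mem_iInter.mp (mem_iInter.mp h6 (σ j)) h7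
    rw [hsub σ hσ] at hSsub
    -- final competitor
    set h : ℂ → ℂ := fun z => g ((r:ℂ) * z) with hhdef
    have hmulmaps : ∀ z ∈ ball (0:ℂ) 1, (r:ℂ) * z ∈ ball (0:ℂ) s := by
      intro z hz
      rw [mem_ball_zero_iff]
      rw [mem_ball_zero_iff] at hz
      calc ‖(r:ℂ) * z‖ = r * ‖z‖ := by
            rw [norm_mul, Complex.norm_real, Real.norm_eq_abs, abs_of_pos hr0]
        _ ≤ r * 1 := by nlinarith
        _ < s := by rw [mul_one]; exact hrs
    have hhd : DifferentiableOn ℂ h (ball 0 1) := by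
      apply DifferentiableOn.comp hgd
        ((differentiable_id.const_mul ((r:ℂ))).differentiableOn)
      intro z hz
      exact hmulmaps z hz
    have hh0 : h 0 = p := by simp only [hhdef, mul_zero, hg0]
    have hhm : ∀ z ∈ ball (0:ℂ) 1, h z ∈ W₀ :=
      fun z hz => hSsub (Or.inl ⟨_, hmulmaps z hz, rfl⟩)
    have hderh : deriv h 0 = deriv g 0 * r := by
      have h1 : HasDerivAt (fun z : ℂ => (r:ℂ) * z) (r:ℂ) 0 := by
        simpa using (hasDerivAt_id (0:ℂ)).const_mul ((r:ℂ))
      have h2 : HasDerivAt g (deriv g 0) ((r:ℂ) * 0) := by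
        rw [mul_zero]
        exact (hgd.differentiableAt (isOpen_ball.mem_nhds h0s)).hasDerivAt
      have h3 := h2.comp 0 h1
      exact h3.deriv
    have hmem : ‖deriv h 0‖ ∈ E W₀ := ⟨h, hhd, hh0, hhm, rfl⟩
    have hle : ‖deriv h 0‖ ≤ L := le_csSup (hbdd W₀ hW₀U) hmem
    have habs2 : ‖deriv h 0‖ = ‖deriv g 0‖ * r := by
      rw [hderh, norm_mul, Complex.norm_real, Real.norm_eq_abs, abs_of_pos hr0]
    rw [habs2] at hle
    have hfinal : r * b ≤ ‖deriv g 0‖ * r := by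
      rw [mul_comm r b]
      exact mul_le_mul_of_nonneg_right hble hr0.le
    linarith
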